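/- Let s, y ∈ ℝⁿ with y ≠ 0 and let μ₁ ∈ (0,1), μ₂ > 0. Define θ₁ = 1 if sᵀy ≥ μ₁ yᵀy/μ₂, and θ₁ = ((1-μ₁) yᵀy/μ₂)/(yᵀy/μ₂ - sᵀy) otherwise. Set s̃ = θ₁ s + (1-θ₁) y/μ₂. Then s̃ᵀ y ≥ (μ₁/μ₂) yᵀy ≥ 0. -/

import Mathlib

open Matrix
/-- Powell's damping step of D_{P(I)}D_{LM} with H = μ₂⁻¹ I:
the damped vector s̃ satisfies s̃ᵀy ≥ (μ₁/μ₂) yᵀy ≥ 0. -/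
theorem powell_damping_lower_bound {n : ℕ} (s y : Fin n → ℝ) (hy : y ≠ 0)
    (μ₁ μ₂ : ℝ) (hμ₁ : 0 < μ₁) (hμ₁' : μ₁ < 1) (hμ₂ : 0 < μ₂)
    (θ₁ : ℝ)
    (hθ : θ₁ = if (μ₁/μ₂) * (y ⬝ᵥ y) ≤ s ⬝ᵥ y then 1
      else ((1 - μ₁) * (y ⬝ᵥ y) / μ₂) / ((y ⬝ᵥ y) / μ₂ - s ⬝ᵥ y))
    (st : Fin n → ℝ)
    (hst : st = θ₁ • s + (1 - θ₁) • μ₂⁻¹ • y) :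
    (μ₁ / μ₂) * (y ⬝ᵥ y) ≤ st ⬝ᵥ y ∧ 0 ≤ (μ₁ / μ₂) * (y ⬝ᵥ y) := by
  have hb : 0 < y ⬝ᵥ y := by
    have h0 : y ⬝ᵥ y ≠ 0 := fun h => hy (by simpa using (dotProduct_self_eq_zero (v := y)).mp h)
    have : 0 ≤ y ⬝ᵥ y := by
      apply Finset.sum_nonneg; intro i _; exact mul_self_nonneg _
    exact lt_of_le_of_ne this (Ne.symm h0)
  set a := s ⬝ᵥ y with ha
  set b := y ⬝ᵥ y with hbdef
  have hsty : st ⬝ᵥ y = θ₁ * a + (1 - θ₁) * (μ₂⁻¹ * b) := by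
    simp [hst, add_dotProduct, smul_dotProduct, smul_eq_mul, mul_assoc]
    rfl
  refine ⟨?_, by positivity⟩
  rw [hsty]
  by_cases hcase : (μ₁/μ₂) * b ≤ a
  · rw [hθ, if_pos hcase]
    simpa [div_mul_eq_mul_div] using hcase
  · have hlt : a < (μ₁/μ₂) * b := not_le.mp hcase
    have hden : 0 < b / μ₂ - a := by
      have : (μ₁/μ₂) * b < b / μ₂ := by
        rw [div_mul_eq_mul_div, div_lt_div_iff₀ hμ₂ hμ₂]
        nlinarith [mul_pos hb hμ₂]
      linarith
    have hdn : b / μ₂ - a ≠ 0 := ne_of_gt hden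
    have hdn2 : b - a * μ₂ ≠ 0 := by
      intro h; apply hdn; field_simp; linarith
    have heq : θ₁ * a + (1 - θ₁) * (μ₂⁻¹ * b) = μ₁ / μ₂ * b := by
      rw [hθ, if_neg hcase]
      field_simp
      ring_nf
      have hdn3 : -(μ₂ * a) + b ≠ 0 := by intro h; apply hdn2; linarith
      field_simp [hdn3]
      ring
    rw [heq]
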